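/- Let A ∈ M_n with W(A) ⊆ S_α for some α ∈ [0, π/2). Then for every s > 0 there exists a unitary matrix U ∈ M_n such that |Im A| ≤ (s·tan α / 2)·Re A + (tan α / (2s))·U* (Re A) U. -/

import Mathlib

open Matrix Set ComplexOrder

variable {m : Type*}

/-- The modulus `|X| = (XᴴX)^{1/2}` of a matrix. -/
noncomputable def matAbs [Fintype m] [DecidableEq m] (X : Matrix m m ℂ) : Matrix m m ℂ :=
  ((Matrix.posSemidef_conjTranspose_mul_self X).isHermitian.eigenvectorUnitary : Matrix m m ℂ) *
    diagonal ((↑) ∘ Real.sqrt ∘ (Matrix.posSemidef_conjTranspose_mul_self X).isHermitian.eigenvalues) *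
    (star (Matrix.posSemidef_conjTranspose_mul_self X).isHermitian.eigenvectorUnitary : Matrix m m ℂ)

theorem matAbs_posSemidef [Fintype m] [DecidableEq m] (X : Matrix m m ℂ) :
    (matAbs X).PosSemidef :=
  by
    unfold matAbs
    have hd := (Matrix.posSemidef_diagonal_iff (R := ℂ) (n := m)
      (d := ((↑) : ℝ → ℂ) ∘ Real.sqrt ∘ (Matrix.posSemidef_conjTranspose_mul_self X).isHermitian.eigenvalues)).2
      (fun i => Complex.zero_le_real.mpr (Real.sqrt_nonneg _))
    exact hd.mul_mul_conjTranspose_same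
      ((Matrix.posSemidef_conjTranspose_mul_self X).isHermitian.eigenvectorUnitary : Matrix m m ℂ)

/-- Functional calculus: apply `f : ℝ → ℝ` to a Hermitian matrix via its spectral
decomposition (junk value `0` for non-Hermitian input). -/
noncomputable def matFun [Fintype m] [DecidableEq m] (f : ℝ → ℝ) (X : Matrix m m ℂ) :
    Matrix m m ℂ :=
  if h : X.IsHermitian then
    (h.eigenvectorUnitary : Matrix m m ℂ) *
      Matrix.diagonal (fun i => (f (h.eigenvalues i) : ℂ)) *
      star (h.eigenvectorUnitary : Matrix m m ℂ)
  else 0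

/-- Real part `Re A = (A + Aᴴ)/2`. -/
noncomputable def reM (A : Matrix m m ℂ) : Matrix m m ℂ := (1/2 : ℂ) • (A + Aᴴ)

/-- Imaginary part `Im A = (A - Aᴴ)/(2i)`. -/
noncomputable def imM (A : Matrix m m ℂ) : Matrix m m ℂ := (1/(2*Complex.I)) • (A - Aᴴ)

/-- Numerical range `W(A) = {x* A x : x*x = 1}`. -/
def numRange [Fintype m] (A : Matrix m m ℂ) : Set ℂ :=
  {z | ∃ x : m → ℂ, star x ⬝ᵥ x = 1 ∧ z = star x ⬝ᵥ A.mulVec x}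

/-- The sector `S_α = {z : Re z ≥ 0, |Im z| ≤ (Re z) tan α}`. -/
def sector (α : ℝ) : Set ℂ := {z | 0 ≤ z.re ∧ |z.im| ≤ z.re * Real.tan α}

namespace SectorAux

variable {n : ℕ}

lemma conj_quad (A : Matrix (Fin n) (Fin n) ℂ) (x : Fin n → ℂ) :
    star x ⬝ᵥ Aᴴ *ᵥ x = starRingEnd ℂ (star x ⬝ᵥ A *ᵥ x) := by
  simp only [dotProduct, mulVec, conjTranspose_apply, map_sum, _root_.map_mul, Pi.star_apply,
    Complex.star_def, Complex.conj_conj, Finset.mul_sum]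
  rw [Finset.sum_comm]
  congr 1; ext i; congr 1; ext j; ring

lemma quad_expand (M : Matrix (Fin n) (Fin n) ℂ) (c : ℂ) (x y : Fin n → ℂ) :
    star (c • x + y) ⬝ᵥ M *ᵥ (c • x + y) =
      (starRingEnd ℂ c) * c * (star x ⬝ᵥ M *ᵥ x) + (starRingEnd ℂ c) * (star x ⬝ᵥ M *ᵥ y)
        + c * (star y ⬝ᵥ M *ᵥ x) + star y ⬝ᵥ M *ᵥ y := by
  simp only [star_add, star_smul, add_dotProduct, smul_dotProduct, mulVec_add, mulVec_smul,
    dotProduct_add, dotProduct_smul, smul_eq_mul, Complex.star_def]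
  ring

lemma quad_re (A : Matrix (Fin n) (Fin n) ℂ) (x : Fin n → ℂ) :
    star x ⬝ᵥ (reM A) *ᵥ x = ((star x ⬝ᵥ A *ᵥ x).re : ℂ) := by
  simp only [reM, smul_mulVec, dotProduct_smul, add_mulVec, dotProduct_add, conj_quad,
    smul_eq_mul]
  rw [Complex.add_conj]
  push_cast
  ring

lemma quad_im (A : Matrix (Fin n) (Fin n) ℂ) (x : Fin n → ℂ) :
    star x ⬝ᵥ (imM A) *ᵥ x = ((star x ⬝ᵥ A *ᵥ x).im : ℂ) := by
  simp only [imM, smul_mulVec, dotProduct_smul, sub_mulVec, dotProduct_sub, conj_quad,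
    smul_eq_mul]
  rw [Complex.sub_conj]
  have hI : Complex.I ≠ 0 := Complex.I_ne_zero
  push_cast
  field_simp

lemma sector_all (A : Matrix (Fin n) (Fin n) ℂ) (α : ℝ) (hA : numRange A ⊆ sector α)
    (x : Fin n → ℂ) : 0 ≤ (star x ⬝ᵥ A *ᵥ x).re ∧
      |(star x ⬝ᵥ A *ᵥ x).im| ≤ (star x ⬝ᵥ A *ᵥ x).re * Real.tan α := by
  rcases eq_or_ne x 0 with rfl | hx
  · simp
  · have hc : star x ⬝ᵥ x = ((∑ i, Complex.normSq (x i) : ℝ) : ℂ) := by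
      push_cast
      simp [dotProduct, Complex.star_def, Complex.normSq_eq_conj_mul_self]
    set c : ℝ := ∑ i, Complex.normSq (x i) with hcdef
    have hcpos : 0 < c := by
      have : ∃ i, x i ≠ 0 := by
        by_contra h
        push_neg at h
        exact hx (funext h)
      obtain ⟨i, hi⟩ := this
      exact Finset.sum_pos' (fun j _ => Complex.normSq_nonneg _)
        ⟨i, Finset.mem_univ i, Complex.normSq_pos.mpr hi⟩
    set u : Fin n → ℂ := ((Real.sqrt c)⁻¹ : ℂ) • x with hu
    have hsq : Real.sqrt c ≠ 0 := by positivity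
    have huu : star u ⬝ᵥ u = 1 := by
      rw [hu]
      simp only [star_smul, smul_dotProduct, dotProduct_smul, smul_eq_mul, hc]
      rw [star_inv₀]
      simp only [Complex.star_def, Complex.conj_ofReal]
      rw [← Complex.ofReal_inv, ← Complex.ofReal_mul, ← Complex.ofReal_mul]
      norm_cast
      rw [← mul_assoc, ← mul_inv, Real.mul_self_sqrt hcpos.le]
      field_simp
    have hz : star u ⬝ᵥ A *ᵥ u = ((c⁻¹ : ℝ) : ℂ) * (star x ⬝ᵥ A *ᵥ x) := by
      rw [hu]
      simp only [star_smul, smul_dotProduct, dotProduct_smul, smul_eq_mul, mulVec_smul]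
      rw [star_inv₀, Complex.star_def, Complex.conj_ofReal, ← mul_assoc, ← mul_inv,
        ← Complex.ofReal_mul, Real.mul_self_sqrt hcpos.le]
      push_cast
      ring
    have hmem : star u ⬝ᵥ A *ᵥ u ∈ sector α := hA ⟨u, huu, rfl⟩
    obtain ⟨h1, h2⟩ := hmem
    rw [hz] at h1 h2
    simp only [Complex.mul_re, Complex.mul_im, Complex.ofReal_re, Complex.ofReal_im,
      zero_mul, sub_zero, zero_add, add_zero, mul_zero] at h1 h2
    constructor
    · have h1' := mul_nonneg hcpos.le h1
      rw [← mul_assoc, mul_inv_cancel₀ hcpos.ne', one_mul] at h1'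
      exact h1'
    · rw [abs_mul, abs_of_nonneg (by positivity : (0:ℝ) ≤ c⁻¹)] at h2
      have h2' := mul_le_mul_of_nonneg_left h2 hcpos.le
      rw [← mul_assoc, mul_inv_cancel₀ hcpos.ne', one_mul] at h2'
      rw [show c * (c⁻¹ * (star x ⬝ᵥ A *ᵥ x).re * Real.tan α)
          = c * c⁻¹ * ((star x ⬝ᵥ A *ᵥ x).re * Real.tan α) by ring,
        mul_inv_cancel₀ hcpos.ne', one_mul] at h2'
      exact h2'

lemma exists_sign_unitary (B : Matrix (Fin n) (Fin n) ℂ) (hB : B.IsHermitian) :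
    ∃ S ∈ Matrix.unitaryGroup (Fin n) ℂ, Sᴴ = S ∧ S * B = matAbs B ∧ B * S = matAbs B := by
  set V : Matrix (Fin n) (Fin n) ℂ := (hB.eigenvectorUnitary : Matrix (Fin n) (Fin n) ℂ) with hV
  have hV1 : star V * V = 1 := Unitary.coe_star_mul_self hB.eigenvectorUnitary
  have hV2 : V * star V = 1 := Unitary.coe_mul_star_self hB.eigenvectorUnitary
  set d : Fin n → ℝ := hB.eigenvalues with hd
  set cng : (Fin n → ℂ) → Matrix (Fin n) (Fin n) ℂ := fun f => V * diagonal f * star V with hcng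
  have mulcng : ∀ f g, cng f * cng g = cng (f * g) := by
    intro f g
    simp only [hcng, mul_assoc]
    rw [← mul_assoc (star V) V, hV1, one_mul, ← mul_assoc (diagonal f) (diagonal g),
      diagonal_mul_diagonal]
    rfl
  have starcng : ∀ f, star (cng f) = cng (star f) := by
    intro f
    simp only [hcng, Matrix.star_mul, star_star]
    rw [Matrix.star_eq_conjTranspose (diagonal f), diagonal_conjTranspose]
    simp only [mul_assoc]
  have hBeq : B = cng (fun i => (d i : ℂ)) := by
    simpa [hcng, Function.comp_def] using hB.spectral_theorem
  set sgn : Fin n → ℂ := fun i => if d i < 0 then -1 else 1 with hsgn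
  set absf : Fin n → ℂ := fun i => ((|d i| : ℝ) : ℂ) with habsf
  set S := cng sgn with hS
  have habs : sgn * (fun i => (d i : ℂ)) = absf := by
    funext i
    by_cases h : d i < 0
    · simp [hsgn, habsf, h, abs_of_neg h, Pi.mul_apply]
    · simp [hsgn, habsf, h, abs_of_nonneg (not_lt.mp h), Pi.mul_apply]
  have hPpsd : (cng absf).PosSemidef := by
    have hD : (diagonal absf).PosSemidef := by
      apply PosSemidef.diagonal
      intro i
      exact Complex.zero_le_real.mpr (abs_nonneg _)
    simpa [hcng, Matrix.star_eq_conjTranspose] using hD.mul_mul_conjTranspose_same V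
  have hsq : (cng absf) ^ 2 = Bᴴ * B := by
    rw [pow_two, mulcng, hB]
    conv_rhs => rw [hBeq]
    rw [mulcng]
    rw [show absf * absf = (fun i => (d i : ℂ)) * (fun i => (d i : ℂ)) from funext fun i => by
      simp only [habsf, Pi.mul_apply, ← Complex.ofReal_mul, abs_mul_abs_self]]
  have hPabs : cng absf = matAbs B := by
    have hBB := Matrix.posSemidef_conjTranspose_mul_self B
    have h1 : matAbs B = hBB.isHermitian.cfc Real.sqrt := by
      simp [matAbs, IsHermitian.cfc]
    open scoped MatrixOrder in
    rw [h1, ← hBB.isHermitian.cfc_eq, ← cfcₙ_eq_cfc (hf0 := Real.sqrt_zero), ← CFC.sqrt_eq_real_sqrt _ hBB.nonneg]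
    open scoped MatrixOrder in
    exact (CFC.sqrt_unique (by rw [← pow_two, hsq]) hPpsd.nonneg).symm
  have hSB : S * B = matAbs B := by
    conv_lhs => rw [hBeq]
    rw [hS, mulcng, habs, hPabs]
  have hBS : B * S = matAbs B := by
    conv_lhs => rw [hBeq]
    rw [hS, mulcng, mul_comm, habs, hPabs]
  have hstarsgn : star sgn = sgn := by
    funext i
    by_cases h : d i < 0 <;> simp [hsgn, h, Pi.star_apply]
  have hSherm : Sᴴ = S := by
    rw [← Matrix.star_eq_conjTranspose, hS, starcng, hstarsgn]
  refine ⟨S, ?_, hSherm, hSB, hBS⟩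
  rw [Matrix.mem_unitaryGroup_iff, hS, starcng, hstarsgn, mulcng]
  have h1 : sgn * sgn = 1 := by
    funext i
    by_cases h : d i < 0 <;> simp [hsgn, h, Pi.mul_apply]
  rw [h1]
  simp only [hcng]
  rw [show diagonal (1 : Fin n → ℂ) = 1 from diagonal_one, mul_one, hV2]

lemma real_smul_mat (r : ℝ) (M : Matrix (Fin n) (Fin n) ℂ) :
    r • M = (r : ℂ) • M := by
  ext i j
  simp [Complex.real_smul]

lemma reM_isHermitian (A : Matrix (Fin n) (Fin n) ℂ) : (reM A).IsHermitian := by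
  show _ᴴ = _
  unfold reM
  rw [conjTranspose_smul, conjTranspose_add, conjTranspose_conjTranspose]
  rw [show star (1/2 : ℂ) = 1/2 by simp, add_comm]

lemma imM_isHermitian (A : Matrix (Fin n) (Fin n) ℂ) : (imM A).IsHermitian := by
  show _ᴴ = _
  unfold imM
  rw [conjTranspose_smul, conjTranspose_sub, conjTranspose_conjTranspose]
  rw [show star (1/(2*Complex.I) : ℂ) = -(1/(2*Complex.I)) by
    simp [Complex.star_def, map_div₀, Complex.conj_I]]
  rw [neg_smul, ← smul_neg, neg_sub]

end SectorAux

open SectorAux in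
theorem abs_im_le_tan_re {n : ℕ} (A : Matrix (Fin n) (Fin n) ℂ) (α : ℝ)
    (hα₀ : 0 ≤ α) (hα₁ : α < Real.pi / 2) (hA : numRange A ⊆ sector α) :
    ∀ s : ℝ, 0 < s → ∃ U ∈ Matrix.unitaryGroup (Fin n) ℂ,
      ((s * Real.tan α / 2) • reM A + (Real.tan α / (2 * s)) • (Uᴴ * reM A * U)
        - matAbs (imM A)).PosSemidef := by
  intro s hs
  set t := Real.tan α with htdef
  have ht : 0 ≤ t := Real.tan_nonneg_of_nonneg_of_le_pi_div_two hα₀ hα₁.le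
  have hReH := reM_isHermitian A
  have hImH := imM_isHermitian A
  obtain ⟨S, hSmem, hSherm, hSB, hBS⟩ := exists_sign_unitary (imM A) hImH
  refine ⟨S, hSmem, ?_⟩
  have hsect := sector_all A α hA
  -- the two auxiliary PSD quadratic forms
  have hCp : ∀ u : Fin n → ℂ, 0 ≤ star u ⬝ᵥ ((t : ℂ) • reM A + imM A) *ᵥ u := by
    intro u
    rw [add_mulVec, dotProduct_add, smul_mulVec, dotProduct_smul, quad_re, quad_im,
      smul_eq_mul]
    rw [show ((t:ℂ) * ((star u ⬝ᵥ A *ᵥ u).re : ℂ) + ((star u ⬝ᵥ A *ᵥ u).im : ℂ))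
        = ((t * (star u ⬝ᵥ A *ᵥ u).re + (star u ⬝ᵥ A *ᵥ u).im : ℝ) : ℂ) by push_cast; ring]
    apply Complex.zero_le_real.mpr
    obtain ⟨h1, h2⟩ := hsect u
    have := (abs_le.mp h2).1
    nlinarith [mul_comm t (star u ⬝ᵥ A *ᵥ u).re]
  have hCm : ∀ u : Fin n → ℂ, 0 ≤ star u ⬝ᵥ ((t : ℂ) • reM A - imM A) *ᵥ u := by
    intro u
    rw [sub_mulVec, dotProduct_sub, smul_mulVec, dotProduct_smul, quad_re, quad_im,
      smul_eq_mul]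
    rw [show ((t:ℂ) * ((star u ⬝ᵥ A *ᵥ u).re : ℂ) - ((star u ⬝ᵥ A *ᵥ u).im : ℂ))
        = ((t * (star u ⬝ᵥ A *ᵥ u).re - (star u ⬝ᵥ A *ᵥ u).im : ℝ) : ℂ) by push_cast; ring]
    apply Complex.zero_le_real.mpr
    obtain ⟨h1, h2⟩ := hsect u
    have := (abs_le.mp h2).2
    nlinarith [mul_comm t (star u ⬝ᵥ A *ᵥ u).re]
  rw [posSemidef_iff_dotProduct_mulVec]
  constructor
  · -- Hermitian
    rw [real_smul_mat, real_smul_mat]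
    refine IsHermitian.sub (IsHermitian.add ?_ ?_) (matAbs_posSemidef (imM A)).1
    · show _ᴴ = _
      rw [conjTranspose_smul, hReH.eq]
      congr 1
      simp [Complex.star_def, Complex.conj_ofReal]
    · show _ᴴ = _
      rw [conjTranspose_smul, (isHermitian_conjTranspose_mul_mul S hReH).eq]
      congr 1
      simp [Complex.star_def, Complex.conj_ofReal]
  · intro x
    set y : Fin n → ℂ := S *ᵥ x with hy
    have hstary : star y = star x ᵥ* S := by rw [hy, star_mulVec, hSherm]
    set qx : ℝ := (star x ⬝ᵥ A *ᵥ x).re with hqx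
    set qy : ℝ := (star y ⬝ᵥ A *ᵥ y).re with hqy
    -- px : quadratic form of matAbs (imM A)
    have hpx0 : 0 ≤ star x ⬝ᵥ (matAbs (imM A)) *ᵥ x := (matAbs_posSemidef (imM A)).dotProduct_mulVec_nonneg x
    set pxr : ℝ := (star x ⬝ᵥ (matAbs (imM A)) *ᵥ x).re with hpxr
    have hpxre : star x ⬝ᵥ (matAbs (imM A)) *ᵥ x = (pxr : ℂ) := by
      obtain ⟨h1, h2⟩ := Complex.le_def.mp hpx0
      apply Complex.ext
      · simp [hpxr]
      · simp only [Complex.ofReal_im]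
        exact h2.symm ▸ rfl
    have hpxr0 : 0 ≤ pxr := (Complex.le_def.mp hpx0).1
    -- cross terms
    have hxy : star x ⬝ᵥ (imM A) *ᵥ y = (pxr : ℂ) := by
      rw [hy, mulVec_mulVec, hBS, hpxre]
    have hyx : star y ⬝ᵥ (imM A) *ᵥ x = (pxr : ℂ) := by
      rw [hstary, ← dotProduct_mulVec, mulVec_mulVec, hSB, hpxre]
    have hq1 : star x ⬝ᵥ (reM A) *ᵥ x = (qx : ℂ) := quad_re A x
    have hq2 : star y ⬝ᵥ (reM A) *ᵥ y = (qy : ℂ) := quad_re A y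
    have him_x : star x ⬝ᵥ (imM A) *ᵥ x = ((star x ⬝ᵥ A *ᵥ x).im : ℂ) := quad_im A x
    have him_y : star y ⬝ᵥ (imM A) *ᵥ y = ((star y ⬝ᵥ A *ᵥ y).im : ℂ) := quad_im A y
    -- key inequality
    have hE1 := hCp ((s : ℂ) • x + (-y))
    have hE2 := hCm ((s : ℂ) • x + y)
    have hsum : star ((s : ℂ) • x + (-y)) ⬝ᵥ ((t : ℂ) • reM A + imM A) *ᵥ ((s : ℂ) • x + (-y))
        + star ((s : ℂ) • x + y) ⬝ᵥ ((t : ℂ) • reM A - imM A) *ᵥ ((s : ℂ) • x + y)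
        = ((2*t*s^2*qx + 2*t*qy - 4*s*pxr : ℝ) : ℂ) := by
      rw [quad_expand, quad_expand]
      simp only [add_mulVec, sub_mulVec, smul_mulVec, dotProduct_add, dotProduct_sub,
        dotProduct_smul, smul_eq_mul, mulVec_neg, dotProduct_neg, neg_dotProduct, star_neg,
        neg_neg, neg_add_rev, neg_sub, neg_mul, mul_neg]
      rw [hq1, hq2, hxy, hyx, him_x, him_y, Complex.conj_ofReal]
      push_cast
      ring
    have hkey : 0 ≤ 2*t*s^2*qx + 2*t*qy - 4*s*pxr := by
      apply Complex.zero_le_real.mp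
      rw [← hsum]
      exact add_nonneg hE1 hE2
    -- target quadratic form
    have htarget : star x ⬝ᵥ ((s * t / 2) • reM A + (t / (2 * s)) • (Sᴴ * reM A * S)
        - matAbs (imM A)) *ᵥ x
        = ((s * t / 2 * qx + t / (2 * s) * qy - pxr : ℝ) : ℂ) := by
      rw [real_smul_mat, real_smul_mat, sub_mulVec, add_mulVec, dotProduct_sub, dotProduct_add,
        smul_mulVec, smul_mulVec, dotProduct_smul, dotProduct_smul, hq1, hpxre]
      have hconj : star x ⬝ᵥ (Sᴴ * reM A * S) *ᵥ x = (qy : ℂ) := by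
        rw [hSherm, ← mulVec_mulVec, ← mulVec_mulVec, dotProduct_mulVec, ← hstary, ← hy, hq2]
      rw [hconj]
      push_cast
      simp only [smul_eq_mul]
      try ring
    rw [htarget]
    apply Complex.zero_le_real.mpr
    have h4s : (0:ℝ) < 4 * s := by linarith
    have hmul : (4*s) * (s * t / 2 * qx + t / (2 * s) * qy - pxr)
        = 2*t*s^2*qx + 2*t*qy - 4*s*pxr := by
      field_simp
      ring
    have : 0 ≤ (4*s) * (s * t / 2 * qx + t / (2 * s) * qy - pxr) := by
      rw [hmul]; exact hkey
    exact nonneg_of_mul_nonneg_right (by linarith [this]) h4s
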